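/- Let Γ be a group acting by homeomorphisms on a perfect, compact metric space Z. Suppose the action is a convergence action and is expanding at every point of Z. Then every point of Z is intrinsically conical. -/

import Mathlib

open Filter Metric Set Topology

/-- A sequence in a group diverges to infinity if it eventually leaves every finite subset. -/
def DivergesToInfinity {G : Type*} (γ : ℕ → G) : Prop :=
  ∀ F : Finset G, {n : ℕ | γ n ∈ F}.Finite

/-- A convergence action: every sequence diverging to infinity has a subsequence converging,
uniformly on compact subsets of the complement of an exceptional point, to a constant map. -/
def ConvergenceAction (G Z : Type*) [Group G] [MetricSpace Z] [MulAction G Z] : Prop :=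
  ∀ γ : ℕ → G, DivergesToInfinity γ →
    ∃ (zp zm : Z) (k : ℕ → ℕ), StrictMono k ∧
      ∀ K : Set Z, IsCompact K → K ⊆ {zm}ᶜ →
        TendstoUniformlyOn (fun i z => γ (k i) • z) (fun _ => zp) atTop K

/-- The action is expanding at `z` if some group element is uniformly expanding on some
neighborhood of `z`, with expansion factor `c > 1`. -/
def ExpandingAt (G : Type*) {Z : Type*} [Group G] [MetricSpace Z] [MulAction G Z]
    (z : Z) : Prop :=
  ∃ (γ : G) (U : Set Z) (c : ℝ), U ∈ 𝓝 z ∧ 1 < c ∧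
    ∀ z₁ ∈ U, ∀ z₂ ∈ U, c * dist z₁ z₂ ≤ dist (γ • z₁) (γ • z₂)

/-- A point `z` is intrinsically conical if there is a sequence `γ n → ∞` in the group such
that `γ n⁻¹ • z` converges to some `a` and the maps `γ n⁻¹` converge, uniformly on compact
subsets of `Z ∖ {z}`, to a constant `b ≠ a`. -/
def IntrinsicallyConical (G : Type*) {Z : Type*} [Group G] [MetricSpace Z] [MulAction G Z]
    (z : Z) : Prop :=
  ∃ (γ : ℕ → G) (a b : Z), DivergesToInfinity γ ∧
    Tendsto (fun n => (γ n)⁻¹ • z) atTop (𝓝 a) ∧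
    (∀ K : Set Z, IsCompact K → K ⊆ {z}ᶜ →
      TendstoUniformlyOn (fun n w => (γ n)⁻¹ • w) (fun _ => b) atTop K) ∧
    b ≠ a

section Aux

variable {G Z : Type*} [Group G] [MetricSpace Z] [CompactSpace Z] [MulAction G Z]

/-- Local surjectivity radius for an expanding element. -/
lemma local_onto (hcont : ∀ γ : G, Continuous fun z : Z => γ • z)
    (γ : G) (w0 : Z) (r c : ℝ) (hr : 0 < r) (hc : 1 < c)
    (hexp : ∀ u ∈ ball w0 (2*r), ∀ v ∈ ball w0 (2*r),
      c * dist u v ≤ dist (γ • u) (γ • v)) :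
    ∃ δ, 0 < δ ∧ δ ≤ r ∧ ∀ w ∈ ball w0 r,
      ball (γ • w) δ ⊆ (fun u => γ • u) '' ball w δ := by
  by_contra hcontra
  push_neg at hcontra
  have hδk : ∀ k : ℕ, (0:ℝ) < min r (1/(k+1)) := by
    intro k
    have : (0:ℝ) < 1/(k+1) := by positivity
    exact lt_min hr this
  have hstep : ∀ k : ℕ, ∃ w ∈ ball w0 r, ∃ y ∈ ball (γ • w) (min r (1/(k+1))),
      y ∉ (fun u => γ • u) '' ball w (min r (1/(k+1))) := by
    intro k
    obtain ⟨w, hw, hns⟩ := hcontra (min r (1/(k+1))) (hδk k) (min_le_left _ _)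
    obtain ⟨y, hy, hny⟩ := Set.not_subset.mp hns
    exact ⟨w, hw, y, hy, hny⟩
  choose w hw y hy hny using hstep
  -- the preimage points are far from w
  have hfar : ∀ k, r ≤ dist (γ⁻¹ • y k) (w k) := by
    intro k
    by_contra hlt
    push_neg at hlt
    apply hny k
    have hu2 : γ⁻¹ • y k ∈ ball w0 (2*r) := by
      have := (hw k)
      rw [mem_ball] at this ⊢
      have := dist_triangle (γ⁻¹ • y k) (w k) w0
      linarith [this]
    have hw2 : w k ∈ ball w0 (2*r) := by
      have hwk := hw k
      rw [mem_ball] at hwk ⊢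
      linarith
    have hexpk := hexp _ hu2 _ hw2
    rw [smul_inv_smul] at hexpk
    have hyk := (hy k)
    rw [mem_ball] at hyk
    have hd : dist (γ⁻¹ • y k) (w k) < min r (1/(k+1)) / c := by
      rw [lt_div_iff₀ (by linarith : (0:ℝ) < c)]
      calc dist (γ⁻¹ • y k) (w k) * c = c * dist (γ⁻¹ • y k) (w k) := by ring
        _ ≤ dist (y k) (γ • w k) := hexpk
        _ < min r (1/(k+1)) := hyk
    refine ⟨γ⁻¹ • y k, ?_, smul_inv_smul γ (y k)⟩
    rw [mem_ball]
    have h1 : min r (1/(k+1)) / c < min r (1/(k+1)) := by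
      have := hδk k
      exact div_lt_self this hc
    linarith
  -- extract a convergent subsequence
  obtain ⟨wl, -, φ, hφ, hlim⟩ := isCompact_univ.tendsto_subseq (x := w) (fun k => mem_univ _)
  have hylim : Tendsto (fun k => y (φ k)) atTop (𝓝 (γ • wl)) := by
    rw [tendsto_iff_dist_tendsto_zero]
    have hb : ∀ k, dist (y (φ k)) (γ • wl) ≤ 1/(φ k + 1) + dist (γ • w (φ k)) (γ • wl) := by
      intro k
      have h1 := (hy (φ k))
      rw [mem_ball] at h1
      have h2 : dist (y (φ k)) (γ • w (φ k)) ≤ 1/(φ k + 1) :=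
        le_trans (le_of_lt h1) (min_le_right _ _)
      have := dist_triangle (y (φ k)) (γ • w (φ k)) (γ • wl)
      linarith
    have h1 : Tendsto (fun k : ℕ => 1/((φ k : ℝ) + 1)) atTop (𝓝 0) :=
      tendsto_one_div_add_atTop_nhds_zero_nat.comp hφ.tendsto_atTop
    have h2 : Tendsto (fun k => dist (γ • w (φ k)) (γ • wl)) atTop (𝓝 0) := by
      have := ((hcont γ).continuousAt (x := wl)).tendsto.comp hlim
      rw [tendsto_iff_dist_tendsto_zero] at this
      exact this
    have h3 : Tendsto (fun k => 1/((φ k:ℝ)+1) + dist (γ • w (φ k)) (γ • wl)) atTop (𝓝 0) := by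
      simpa using h1.add h2
    exact squeeze_zero (fun k => dist_nonneg) hb h3
  have hulim : Tendsto (fun k => γ⁻¹ • y (φ k)) atTop (𝓝 wl) := by
    have := ((hcont γ⁻¹).continuousAt (x := γ • wl)).tendsto.comp hylim
    simpa [Function.comp_def, inv_smul_smul] using this
  have hdist : Tendsto (fun k => dist (γ⁻¹ • y (φ k)) (w (φ k))) atTop (𝓝 0) := by
    simpa using hulim.dist hlim
  have : r ≤ (0:ℝ) := ge_of_tendsto hdist (Eventually.of_forall fun k => hfar (φ k))
  linarith

/-- Uniform expansion data on a compact space. -/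
lemma uniform_expansion [Nonempty Z] (hcont : ∀ γ : G, Continuous fun z : Z => γ • z)
    (hexp : ∀ z : Z, ExpandingAt G z) :
    ∃ (c δ : ℝ) (g : Z → G), 1 < c ∧ 0 < δ ∧
      (∀ w : Z, ∀ u ∈ ball w δ, ∀ v ∈ ball w δ,
        c * dist u v ≤ dist (g w • u) (g w • v)) ∧
      (∀ w : Z, ball (g w • w) δ ⊆ (fun u => g w • u) '' ball w δ) := by
  -- local data at each point
  have hloc : ∀ w : Z, ∃ (γ : G) (r c δ : ℝ), 0 < r ∧ 1 < c ∧ 0 < δ ∧ δ ≤ r ∧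
      (∀ u ∈ ball w (2*r), ∀ v ∈ ball w (2*r),
        c * dist u v ≤ dist (γ • u) (γ • v)) ∧
      (∀ w' ∈ ball w r, ball (γ • w') δ ⊆ (fun u => γ • u) '' ball w' δ) := by
    intro w
    obtain ⟨γ, U, c, hU, hc, hex⟩ := hexp w
    obtain ⟨ε, hε, hball⟩ := Metric.mem_nhds_iff.mp hU
    have hr : (0:ℝ) < ε/2 := by linarith
    have hex' : ∀ u ∈ ball w (2*(ε/2)), ∀ v ∈ ball w (2*(ε/2)),
        c * dist u v ≤ dist (γ • u) (γ • v) := by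
      intro u hu v hv
      have h2 : (2:ℝ)*(ε/2) = ε := by ring
      rw [h2] at hu hv
      exact hex u (hball hu) v (hball hv)
    obtain ⟨δ, hδ, hδr, honto⟩ := local_onto hcont γ w (ε/2) c hr hc hex'
    exact ⟨γ, ε/2, c, δ, hr, hc, hδ, hδr, hex', honto⟩
  choose γf rf cf δf hrf hcf hδf hδrf hexf hontof using hloc
  -- finite subcover
  have hcover : (univ : Set Z) ⊆ ⋃ w : Z, ball w (rf w) :=
    fun w _ => mem_iUnion.mpr ⟨w, mem_ball_self (hrf w)⟩
  obtain ⟨t, ht⟩ := isCompact_univ.elim_finite_subcover (fun w => ball w (rf w))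
    (fun w => isOpen_ball) hcover
  have hne : t.Nonempty := by
    obtain ⟨z0⟩ := ‹Nonempty Z›
    have := ht (mem_univ z0)
    rw [mem_iUnion₂] at this
    obtain ⟨i, hi, -⟩ := this
    exact ⟨i, hi⟩
  set c : ℝ := t.inf' hne cf with hcdef
  set δ : ℝ := t.inf' hne δf with hδdef
  have hc1 : 1 < c := (Finset.lt_inf'_iff hne).mpr fun i hi => hcf i
  have hδ0 : 0 < δ := (Finset.lt_inf'_iff hne).mpr fun i hi => hδf i
  -- choice of covering center for each point
  have hsel : ∀ w : Z, ∃ i ∈ t, w ∈ ball i (rf i) := by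
    intro w
    have := ht (mem_univ w)
    rw [mem_iUnion₂] at this
    obtain ⟨i, hi, hw⟩ := this
    exact ⟨i, hi, hw⟩
  choose idx hidxt hidxb using hsel
  refine ⟨c, δ, fun w => γf (idx w), hc1, hδ0, ?_, ?_⟩
  · intro w u hu v hv
    have hδle : δ ≤ δf (idx w) := Finset.inf'_le _ (hidxt w)
    have hcle : c ≤ cf (idx w) := Finset.inf'_le _ (hidxt w)
    have hδr : δ ≤ rf (idx w) := le_trans hδle (hδrf _)
    have hwi := hidxb w
    rw [mem_ball] at hwi hu hv
    have hui : u ∈ ball (idx w) (2 * rf (idx w)) := by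
      rw [mem_ball]
      have := dist_triangle u w (idx w)
      linarith
    have hvi : v ∈ ball (idx w) (2 * rf (idx w)) := by
      rw [mem_ball]
      have := dist_triangle v w (idx w)
      linarith
    calc c * dist u v ≤ cf (idx w) * dist u v :=
          mul_le_mul_of_nonneg_right hcle dist_nonneg
      _ ≤ dist (γf (idx w) • u) (γf (idx w) • v) := hexf (idx w) u hui v hvi
  · intro w yy hball
    have hδle : δ ≤ δf (idx w) := Finset.inf'_le _ (hidxt w)
    have hcle : c ≤ cf (idx w) := Finset.inf'_le _ (hidxt w)
    have hball' : yy ∈ ball (γf (idx w) • w) (δf (idx w)) := by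
      rw [mem_ball] at hball ⊢; linarith
    obtain ⟨u, hu, huy⟩ := hontof (idx w) w (hidxb w) hball'
    refine ⟨u, ?_, huy⟩
    have hwi := hidxb w
    rw [mem_ball] at hwi hu hball ⊢
    have hui : u ∈ ball (idx w) (2 * rf (idx w)) := by
      rw [mem_ball]
      have h2 : δf (idx w) ≤ rf (idx w) := hδrf _
      have := dist_triangle u w (idx w)
      linarith
    have hwi2 : w ∈ ball (idx w) (2 * rf (idx w)) := by
      rw [mem_ball]
      have h0 : 0 < rf (idx w) := hrf _
      linarith
    have hexpuw := hexf (idx w) u hui w hwi2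
    have hci : 1 < cf (idx w) := hcf _
    have huy' : γf (idx w) • u = yy := huy
    have : cf (idx w) * dist u w < δ := by
      calc cf (idx w) * dist u w ≤ dist (γf (idx w) • u) (γf (idx w) • w) := hexpuw
        _ = dist yy (γf (idx w) • w) := by rw [huy']
        _ < δ := hball
    nlinarith [dist_nonneg (x := u) (y := w)]

omit [CompactSpace Z] in
lemma accumulation (hperf : ∀ z : Z, ¬ IsOpen ({z} : Set Z)) :
    ∀ x : Z, ∀ ε : ℝ, 0 < ε → ∃ y, y ≠ x ∧ dist x y < ε := by
  intro x ε hε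
  by_contra h
  push_neg at h
  apply hperf x
  have : ball x ε = {x} := by
    apply Subset.antisymm
    · intro y hy
      rw [mem_ball] at hy
      by_contra hyx
      have := h y (by simpa using hyx)
      rw [dist_comm] at hy
      linarith
    · intro y hy
      rw [mem_singleton_iff] at hy
      subst hy
      exact mem_ball_self hε
  rw [← this]
  exact isOpen_ball

/-- Uniform separation constant in a perfect compact metric space. -/
lemma uniform_sep (hperf : ∀ z : Z, ¬ IsOpen ({z} : Set Z)) (δ : ℝ) (hδ : 0 < δ) :
    ∃ ε0 : ℝ, 0 < ε0 ∧ ∀ w : Z, ∃ q, dist w q < δ ∧ ε0 ≤ dist w q := by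
  by_contra hcon
  push_neg at hcon
  have hstep : ∀ k : ℕ, ∃ w : Z, ∀ q, dist w q < δ → dist w q < 1/(k+1) := by
    intro k
    exact hcon (1/(k+1)) (by positivity)
  choose w hw using hstep
  obtain ⟨wl, -, φ, hφ, hlim⟩ := isCompact_univ.tendsto_subseq (x := w) (fun k => mem_univ _)
  obtain ⟨y, hyne, hyd⟩ := accumulation hperf wl (δ/2) (by linarith)
  set s := dist wl y with hsdef
  have hsp : 0 < s := dist_pos.mpr (Ne.symm hyne)
  have hev1 : ∀ᶠ k in atTop, dist (w (φ k)) wl < min (s/2) (δ/2) := by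
    have := Metric.tendsto_atTop.mp hlim
    obtain ⟨N, hN⟩ := this (min (s/2) (δ/2)) (by positivity)
    exact eventually_atTop.mpr ⟨N, fun k hk => hN k hk⟩
  have hev2 : ∀ᶠ k in atTop, 1/((φ k : ℝ)+1) < s/2 := by
    have h1 : Tendsto (fun k : ℕ => 1/((φ k : ℝ) + 1)) atTop (𝓝 0) :=
      tendsto_one_div_add_atTop_nhds_zero_nat.comp hφ.tendsto_atTop
    exact h1.eventually (eventually_lt_nhds (by positivity : (0:ℝ) < s/2)) |>.mono (fun k h => h)
  obtain ⟨k, h1, h2⟩ := (hev1.and hev2).exists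
  have hd : dist (w (φ k)) y < δ := by
    have := dist_triangle (w (φ k)) wl y
    have hm := lt_of_lt_of_le h1 (min_le_right _ _)
    linarith
  have hsmall := hw (φ k) y hd
  have hbig : s/2 ≤ dist (w (φ k)) y := by
    have := dist_triangle wl (w (φ k)) y
    have hm := lt_of_lt_of_le h1 (min_le_left _ _)
    rw [dist_comm wl (w (φ k))] at this
    linarith
  linarith

/-- The orbit points of the iterated expansion. -/
def seqPt (g : Z → G) (z : Z) : ℕ → Z
  | 0 => z
  | n+1 => g (seqPt g z n) • seqPt g z n

/-- The group elements of the iterated expansion. -/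
def seqEl (g : Z → G) (z : Z) : ℕ → G
  | 0 => 1
  | n+1 => g (seqPt g z n) * seqEl g z n

end Aux

/-- If a convergence action of `Γ` on a perfect compact metric space `Z` is expanding at
every point of `Z`, then every point of `Z` is intrinsically conical. -/
theorem expanding_convergence_action_all_points_intrinsically_conical
    {G Z : Type*} [Group G] [MetricSpace Z] [CompactSpace Z] [MulAction G Z]
    (hcont : ∀ γ : G, Continuous fun z : Z => γ • z)
    (hperf : ∀ z : Z, ¬ IsOpen ({z} : Set Z))
    (hconv : ConvergenceAction G Z)
    (hexp : ∀ z : Z, ExpandingAt G z) :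
    ∀ z : Z, IntrinsicallyConical G z := by
  classical
  intro z
  haveI : Nonempty Z := ⟨z⟩
  obtain ⟨c, δ, g, hc, hδ, hE, hS⟩ := uniform_expansion hcont hexp
  obtain ⟨ε0, hε0, hsep⟩ := uniform_sep hperf δ hδ
  choose q hq1 hq2 using hsep
  set x : ℕ → Z := seqPt g z with hxdef
  set β : ℕ → G := seqEl g z with hβdef
  have hx0 : x 0 = z := rfl
  have hxs : ∀ n, x (n+1) = g (x n) • x n := fun n => rfl
  have hβ0 : β 0 = 1 := rfl
  have hβs : ∀ n, β (n+1) = g (x n) * β n := fun n => rfl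
  have hβz : ∀ n, β n • z = x n := by
    intro n
    induction n with
    | zero => rw [hβ0, hx0, one_smul]
    | succ n ih => rw [hβs, hxs, mul_smul, ih]
  set V : ℕ → Set Z := fun n => {u | ∀ k ≤ n, β k • u ∈ ball (x k) δ} with hVdef
  have hVmono : ∀ {n₁ n₂ : ℕ}, n₁ ≤ n₂ → V n₂ ⊆ V n₁ :=
    fun h u hu k hk => hu k (hk.trans h)
  have hVz : ∀ n, z ∈ V n := by
    intro n k hk
    rw [hβz]
    exact mem_ball_self hδ
  have hVself : ∀ n, ∀ u ∈ V n, β n • u ∈ ball (x n) δ := fun n u hu => hu n le_rfl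
  have hI3 : ∀ n, ∀ u ∈ V n, ∀ v ∈ V n, c^n * dist u v ≤ dist (β n • u) (β n • v) := by
    intro n
    induction n with
    | zero =>
      intro u hu v hv
      rw [hβ0, pow_zero, one_mul, one_smul, one_smul]
    | succ n ih =>
      intro u hu v hv
      have hu' : u ∈ V n := hVmono (Nat.le_succ n) hu
      have hv' : v ∈ V n := hVmono (Nat.le_succ n) hv
      have h1 := ih u hu' v hv'
      have h2 := hE (x n) _ (hVself n u hu') _ (hVself n v hv')
      rw [hβs, mul_smul, mul_smul]
      calc c^(n+1) * dist u v = c * (c^n * dist u v) := by ring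
        _ ≤ c * dist (β n • u) (β n • v) :=
            mul_le_mul_of_nonneg_left h1 (by linarith)
        _ ≤ dist (g (x n) • β n • u) (g (x n) • β n • v) := h2
  have hI4 : ∀ n, ball (x n) δ ⊆ (fun u => β n • u) '' V n := by
    intro n
    induction n with
    | zero =>
      intro y hy
      refine ⟨y, ?_, by show β 0 • y = y; rw [hβ0, one_smul]⟩
      intro k hk
      have hk0 : k = 0 := Nat.le_zero.mp hk
      subst hk0
      rw [hβ0, one_smul, hx0]
      rw [hx0] at hy
      exact hy
    | succ n ih =>
      intro y hy
      have hy' : y ∈ ball (g (x n) • x n) δ := by rw [← hxs n]; exact hy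
      obtain ⟨u, hu, huy⟩ := hS (x n) hy'
      have huy' : g (x n) • u = y := huy
      obtain ⟨v, hv, hvy⟩ := ih hu
      have hvy' : β n • v = u := hvy
      refine ⟨v, ?_, ?_⟩
      · intro k hk
        rcases eq_or_lt_of_le hk with heq | hlt
        · subst heq
          rw [hβs, mul_smul, hvy', huy']
          exact hy
        · exact hv k (Nat.lt_succ_iff.mp hlt)
      · show β (n+1) • v = y
        rw [hβs, mul_smul, hvy', huy']
  have hVdiam : ∀ n, ∀ u ∈ V n, dist u z ≤ δ / c^n := by
    intro n u hu
    have h1 := hI3 n u hu z (hVz n)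
    rw [hβz] at h1
    have h2 : dist (β n • u) (x n) < δ := mem_ball.mp (hVself n u hu)
    have hcp : (0:ℝ) < c^n := pow_pos (by linarith) n
    rw [le_div_iff₀ hcp]
    calc dist u z * c^n = c^n * dist u z := by ring
      _ ≤ dist (β n • u) (x n) := h1
      _ ≤ δ := le_of_lt h2
  have hpow0 : Tendsto (fun n : ℕ => δ / c ^ n) atTop (𝓝 0) :=
    Tendsto.div_atTop tendsto_const_nhds (tendsto_pow_atTop_atTop_of_one_lt hc)
  -- divergence of β
  have hβdiv : DivergesToInfinity β := by
    intro F
    have hsub : {n | β n ∈ F} ⊆ ⋃ h ∈ (F : Finset G), {n | β n = h} := by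
      intro n hn
      exact mem_iUnion₂.mpr ⟨β n, hn, rfl⟩
    refine Set.Finite.subset (Set.Finite.biUnion F.finite_toSet fun h _ => ?_) hsub
    obtain ⟨η, hη, hηe⟩ := Metric.uniformContinuous_iff.mp
      (CompactSpace.uniformContinuous_of_continuous (hcont h)) ε0 hε0
    have hev : ∀ᶠ n in atTop, δ / c^n < η := hpow0.eventually (eventually_lt_nhds hη)
    obtain ⟨N, hN⟩ := eventually_atTop.mp hev
    refine Set.Finite.subset (Set.finite_Iio N) ?_
    intro n hn
    simp only [mem_setOf_eq] at hn
    rw [Set.mem_Iio]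
    by_contra hge
    push_neg at hge
    have hηn := hN n hge
    have hball : q (x n) ∈ ball (x n) δ := mem_ball'.mpr (hq1 (x n))
    obtain ⟨v, hv, hvq⟩ := hI4 n hball
    have hvq' : β n • v = q (x n) := hvq
    have hdvz : dist v z ≤ δ / c^n := hVdiam n v hv
    have hsm : dist (h • v) (h • z) < ε0 := hηe (lt_of_le_of_lt hdvz hηn)
    rw [← hn, hvq', hβz, dist_comm] at hsm
    linarith [hq2 (x n)]
  have hβinvdiv : DivergesToInfinity (fun n => (β n)⁻¹) := by
    intro F
    refine (hβdiv (F.image (·⁻¹))).subset ?_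
    intro n hn
    simp only [mem_setOf_eq] at hn ⊢
    exact Finset.mem_image.mpr ⟨(β n)⁻¹, hn, inv_inv _⟩
  obtain ⟨zp, zm, k, hk, huc⟩ := hconv _ hβinvdiv
  obtain ⟨a, -, φ, hφ, hxa⟩ :=
    isCompact_univ.tendsto_subseq (x := fun i => x (k i)) (fun i => mem_univ _)
  set m : ℕ → ℕ := k ∘ φ with hmdef
  have hm : StrictMono m := hk.comp hφ
  have huc' : ∀ K : Set Z, IsCompact K → K ⊆ {zm}ᶜ →
      TendstoUniformlyOn (fun i w => (β (m i))⁻¹ • w) (fun _ => zp) atTop K := by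
    intro K hK hKz
    have h0 := huc K hK hKz
    rw [Metric.tendstoUniformlyOn_iff] at h0 ⊢
    intro ε hε
    exact hφ.tendsto_atTop.eventually (h0 ε hε)
  have hxa' : Tendsto (fun i => x (m i)) atTop (𝓝 a) := hxa
  -- the attracting point of the inverse sequence is z
  have hzp : zp = z := by
    set s : ℕ → Z := fun i =>
      if ε0/2 ≤ dist (x (m i)) zm then x (m i) else q (x (m i)) with hs
    set K : Set Z := (ball zm (ε0/2))ᶜ with hK
    have hKc : IsCompact K := isOpen_ball.isClosed_compl.isCompact
    have hKzm : K ⊆ {zm}ᶜ := by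
      intro u hu
      simp only [mem_compl_iff, mem_singleton_iff]
      intro h
      subst h
      exact hu (mem_ball_self (by linarith))
    have hsK : ∀ i, s i ∈ K := by
      intro i
      by_cases hcase : ε0/2 ≤ dist (x (m i)) zm
      · simp only [hs, if_pos hcase]
        intro hmem
        rw [mem_ball] at hmem
        linarith
      · push_neg at hcase
        simp only [hs, if_neg (not_le.mpr hcase)]
        intro hmem
        rw [mem_ball] at hmem
        have h1 := hq2 (x (m i))
        have h2 := dist_triangle (x (m i)) (q (x (m i))) zm
        have h3 := dist_triangle (x (m i)) zm (q (x (m i)))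
        rw [dist_comm zm (q (x (m i)))] at h3
        linarith
    have hβvirt : ∀ i, dist ((β (m i))⁻¹ • s i) z ≤ δ / c ^ (m i) := by
      intro i
      by_cases hcase : ε0/2 ≤ dist (x (m i)) zm
      · simp only [hs, if_pos hcase]
        have hzz : (β (m i))⁻¹ • x (m i) = z := by rw [← hβz (m i), inv_smul_smul]
        rw [hzz, dist_self]
        positivity
      · simp only [hs, if_neg hcase]
        obtain ⟨v, hv, hvq⟩ := hI4 (m i) (mem_ball'.mpr (hq1 (x (m i))))
        have hvq' : β (m i) • v = q (x (m i)) := hvq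
        rw [← hvq', inv_smul_smul]
        exact hVdiam _ v hv
    have hlim1 : Tendsto (fun i => (β (m i))⁻¹ • s i) atTop (𝓝 z) := by
      rw [tendsto_iff_dist_tendsto_zero]
      refine squeeze_zero (fun i => dist_nonneg) hβvirt ?_
      exact hpow0.comp hm.tendsto_atTop
    have hlim2 : Tendsto (fun i => (β (m i))⁻¹ • s i) atTop (𝓝 zp) := by
      rw [Metric.tendsto_atTop]
      intro ε hε
      obtain ⟨N, hN⟩ := eventually_atTop.mp
        (Metric.tendstoUniformlyOn_iff.mp (huc' K hKc hKzm) ε hε)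
      exact ⟨N, fun i hi => by rw [dist_comm]; exact hN i hi (s i) (hsK i)⟩
    exact tendsto_nhds_unique hlim2 hlim1
  -- the "swap" of attracting and repelling points
  have hswap : ∀ K : Set Z, IsCompact K → K ⊆ {z}ᶜ →
      TendstoUniformlyOn (fun i w => β (m i) • w) (fun _ => zm) atTop K := by
    intro K hK hKz
    rw [Metric.tendstoUniformlyOn_iff]
    intro ε hε
    rcases K.eq_empty_or_nonempty with hKe | hKne
    · filter_upwards with i w hw
      rw [hKe] at hw
      exact absurd hw (notMem_empty w)
    · have hzK : z ∉ K := fun h => by simpa using hKz h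
      have hρ : 0 < infDist z K :=
        (IsClosed.notMem_iff_infDist_pos hK.isClosed hKne).mp hzK
      set K' : Set Z := (ball zm ε)ᶜ with hK'
      have hK'c : IsCompact K' := isOpen_ball.isClosed_compl.isCompact
      have hK'zm : K' ⊆ {zm}ᶜ := by
        intro u hu
        simp only [mem_compl_iff, mem_singleton_iff]
        intro h
        subst h
        exact hu (mem_ball_self hε)
      have h0 := Metric.tendstoUniformlyOn_iff.mp (huc' K' hK'c hK'zm) _ hρ
      rw [hzp] at h0
      filter_upwards [h0] with i hi
      intro w hw
      by_contra hge
      push_neg at hge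
      have hmem : β (m i) • w ∈ K' := by
        intro hball
        rw [mem_ball, dist_comm] at hball
        linarith
      have hcl := hi _ hmem
      rw [inv_smul_smul] at hcl
      have hρle : infDist z K ≤ dist z w := infDist_le_dist_of_mem hw
      linarith
  -- the two limit points are distinct
  have hzma : zm ≠ a := by
    have hw0 : ∃ w0 : Z, w0 ≠ z := by
      by_contra hno
      push_neg at hno
      apply hperf z
      have huniv : ({z} : Set Z) = univ :=
        eq_univ_of_forall fun w => by rw [mem_singleton_iff]; exact hno w
      rw [huniv]
      exact isOpen_univ
    obtain ⟨w0, hw0⟩ := hw0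
    intro heq
    have hsub0 : ({w0} : Set Z) ⊆ {z}ᶜ := by
      intro u hu
      rw [mem_singleton_iff] at hu
      subst hu
      simp only [mem_compl_iff, mem_singleton_iff]
      exact hw0
    have hsw := hswap {w0} isCompact_singleton hsub0
    have h1 : Tendsto (fun i => β (m i) • w0) atTop (𝓝 zm) := by
      rw [Metric.tendsto_atTop]
      intro ε hε
      obtain ⟨N, hN⟩ := eventually_atTop.mp (Metric.tendstoUniformlyOn_iff.mp hsw ε hε)
      exact ⟨N, fun i hi => by rw [dist_comm]; exact hN i hi w0 rfl⟩
    have h2 : Tendsto (fun i => dist (β (m i) • w0) (x (m i))) atTop (𝓝 0) := by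
      have := h1.dist hxa'
      rw [heq, dist_self] at this
      exact this
    have h3 : ∀ᶠ i in atTop, δ ≤ dist (β (m i) • w0) (x (m i)) := by
      have hpos : 0 < dist w0 z := dist_pos.mpr hw0
      have hev : ∀ᶠ n in atTop, δ / c^n < dist w0 z :=
        hpow0.eventually (eventually_lt_nhds hpos)
      have hev' : ∀ᶠ i in atTop, δ / c^(m i) < dist w0 z :=
        hm.tendsto_atTop.eventually hev
      filter_upwards [hev'] with i hi
      have hnV : w0 ∉ V (m i) := by
        intro hvmem
        have := hVdiam _ w0 hvmem
        linarith
      by_contra hlt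
      push_neg at hlt
      obtain ⟨v, hv, hvq⟩ := hI4 (m i) (mem_ball.mpr hlt)
      have hvq' : β (m i) • v = β (m i) • w0 := hvq
      have hveq : v = w0 := smul_left_cancel _ hvq'
      exact hnV (hveq ▸ hv)
    have : δ ≤ (0:ℝ) := ge_of_tendsto h2 h3
    linarith
  -- conclusion
  refine ⟨fun i => (β (m i))⁻¹, a, zm, ?_, ?_, ?_, hzma⟩
  · intro F
    have h1 := hβinvdiv F
    have hsub : {i | (fun i => (β (m i))⁻¹) i ∈ F} ⊆ m ⁻¹' {n | (β n)⁻¹ ∈ F} :=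
      fun i hi => hi
    exact (h1.preimage hm.injective.injOn).subset hsub
  · simp only [inv_inv]
    have hfe : (fun n => β (m n) • z) = fun n => x (m n) := funext fun n => hβz (m n)
    rw [hfe]
    exact hxa'
  · intro K hK hKz
    simpa only [inv_inv] using hswap K hK hKz
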